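/- For any positive integers m and n with gcd(m,n)=1, the rational q-Catalan function C_{m,n}(q) = (1/[m+n]_q)·qbinom(m+n,n) is a polynomial in q with nonnegative integer coefficients. -/

import Mathlib

open Polynomial

noncomputable def q : RatFunc ℚ := RatFunc.X

noncomputable def qint (t : RatFunc ℚ) (k : ℕ) : RatFunc ℚ := (1 - t ^ k) / (1 - t)

noncomputable def qfact (t : RatFunc ℚ) : ℕ → RatFunc ℚ
  | 0 => 1
  | k + 1 => qint t (k + 1) * qfact t k

noncomputable def qbinom (t : RatFunc ℚ) (a b : ℕ) : RatFunc ℚ :=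
  qfact t a / (qfact t b * qfact t (a - b))

noncomputable def qCat (t : RatFunc ℚ) (m n : ℕ) : RatFunc ℚ :=
  (qint t (m + n))⁻¹ * qbinom t (m + n) n

open Finset

namespace QCatAux

lemma hq : q = RatFunc.X := rfl

lemma one_sub_q_pow_ne (k : ℕ) (hk : 0 < k) : (1 : RatFunc ℚ) - q ^ k ≠ 0 := by
  intro h
  have h1 : (algebraMap ℚ[X] (RatFunc ℚ)) (1 - X ^ k) = 0 := by
    push_cast [map_sub, map_one, map_pow, RatFunc.algebraMap_X, ← hq]
    exact h
  have h2 : (1 : ℚ[X]) - X ^ k = 0 := by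
    apply RatFunc.algebraMap_injective ℚ (by simpa using h1)
  have := congrArg (fun p => Polynomial.coeff p k) h2
  simp only [Polynomial.coeff_sub, Polynomial.coeff_one, Polynomial.coeff_X_pow,
    Polynomial.coeff_zero, if_pos rfl, if_neg (by omega : ¬ k = 0)] at this
  norm_num at this

lemma one_sub_q_ne : (1 : RatFunc ℚ) - q ≠ 0 := by
  simpa using one_sub_q_pow_ne 1 one_pos

lemma qint_ne (k : ℕ) (hk : 0 < k) : qint q k ≠ 0 :=
  div_ne_zero (one_sub_q_pow_ne k hk) one_sub_q_ne

lemma qfact_ne (k : ℕ) : qfact q k ≠ 0 := by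
  induction k with
  | zero => simp [qfact]
  | succ k ih => exact mul_ne_zero (qint_ne (k+1) k.succ_pos) ih

lemma qint_add (a b : ℕ) : qint q (a + b) = qint q a + q ^ a * qint q b := by
  rw [qint, qint, qint]
  field_simp
  ring

lemma q_ne_zero : q ≠ 0 := by
  intro h
  have h1 : (algebraMap ℚ[X] (RatFunc ℚ)) X = (algebraMap ℚ[X] (RatFunc ℚ)) 0 := by
    rw [RatFunc.algebraMap_X, ← hq, h, map_zero]
  exact Polynomial.X_ne_zero (RatFunc.algebraMap_injective ℚ h1)

-- Pascal recursion for qbinom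
lemma qbinom_pascal (N n : ℕ) (h : n < N) :
    qbinom q (N+1) (n+1) = qbinom q N (n+1) + q ^ (N - n) * qbinom q N n := by
  have hNn : 0 < N - n := by omega
  have e1 : qfact q (N+1) = qint q (N+1) * qfact q N := rfl
  have e2 : qfact q (n+1) = qint q (n+1) * qfact q n := rfl
  have e3 : (N + 1) - (n + 1) = N - n := by omega
  have e4 : qfact q (N - n) = qint q (N - n) * qfact q (N - n - 1) := by
    obtain ⟨k, hk⟩ : ∃ k, N - n = k + 1 := ⟨N - n - 1, by omega⟩
    rw [hk, Nat.add_sub_cancel]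
    rfl
  have e5 : N - (n+1) = N - n - 1 := by omega
  have key : qint q (N+1) = qint q (N - n) + q ^ (N - n) * qint q (n+1) := by
    rw [show N + 1 = (N - n) + (n + 1) by omega]
    exact qint_add _ _
  rw [qbinom, qbinom, qbinom, e3, e5, e1, e2, e4, key]
  have h1 := qfact_ne N
  have h2 := qfact_ne n
  have h3 := qfact_ne (N - n - 1)
  have h4 := qint_ne (n+1) n.succ_pos
  have h5 := qint_ne (N - n) hNn
  field_simp

lemma qbinom_zero (N : ℕ) : qbinom q N 0 = 1 := by
  rw [qbinom, Nat.sub_zero, show qfact q 0 = 1 from rfl, one_mul, div_self (qfact_ne N)]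

lemma qbinom_self (N : ℕ) : qbinom q N N = 1 := by
  rw [qbinom]
  simp only [Nat.sub_self]
  rw [show qfact q 0 = 1 from rfl, mul_one, div_self (qfact_ne N)]

end QCatAux
-- appended fragment
namespace QCatAux

noncomputable def Gp (N n : ℕ) : ℚ[X] := ∑ S ∈ (range N).powersetCard n, X ^ (∑ i ∈ S, i)

lemma Gp_zero (N : ℕ) : Gp N 0 = 1 := by
  simp [Gp]

lemma Gp_empty (n : ℕ) : Gp 0 (n+1) = 0 := by
  rw [Gp, Finset.powersetCard_eq_empty.mpr (by simp)]
  simp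

lemma Gp_pascal (N n : ℕ) :
    Gp (N+1) (n+1) = Gp N (n+1) + X ^ N * Gp N n := by
  have hN : N ∉ range N := by simp
  simp only [Gp]
  rw [range_add_one, powersetCard_succ_insert hN]
  rw [sum_union]
  · congr 1
    rw [sum_image]
    · rw [Finset.mul_sum]
      apply sum_congr rfl
      intro S hS
      have hNS : N ∉ S := by
        intro hmem
        exact hN (mem_powersetCard.mp hS |>.1 hmem)
      rw [sum_insert hNS, pow_add]
    · intro S hS T hT hST
      have hNS : N ∉ S := fun hmem => hN (mem_powersetCard.mp hS |>.1 hmem)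
      have hNT : N ∉ T := fun hmem => hN (mem_powersetCard.mp hT |>.1 hmem)
      have := congrArg (fun U => Finset.erase U N) hST
      simpa [Finset.erase_insert hNS, Finset.erase_insert hNT] using this
  · rw [Finset.disjoint_left]
    intro S hS hS'
    have h1 : S ⊆ range N := (mem_powersetCard.mp hS).1
    obtain ⟨T, hT, rfl⟩ := Finset.mem_image.mp hS'
    have : N ∈ range N := h1 (mem_insert_self N T)
    simp at this

def Tsum (n : ℕ) : ℕ := ∑ i ∈ range n, i

lemma Gp_eq (N : ℕ) : ∀ n : ℕ, n ≤ N →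
    (algebraMap ℚ[X] (RatFunc ℚ)) (Gp N n) = q ^ (Tsum n) * qbinom q N n := by
  induction N with
  | zero =>
    intro n hn
    interval_cases n
    simp [Gp_zero, Tsum, qbinom_zero]
  | succ N ih =>
    intro n hn
    match n with
    | 0 => simp [Gp_zero, Tsum, qbinom_zero]
    | Nat.succ m =>
      have hTs : Tsum (m+1) = Tsum m + m := by
        rw [Tsum, Tsum, Finset.sum_range_succ]
      rcases Nat.lt_or_ge m N with hmN | hmN
      · -- m + 1 ≤ N
        rw [Gp_pascal, map_add, map_mul, map_pow, RatFunc.algebraMap_X, ← hq]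
        rw [ih (m+1) hmN, ih m (le_of_lt hmN)]
        rw [qbinom_pascal N m hmN, hTs]
        have hp : q ^ m * q ^ (N - m) = q ^ N := by
          rw [← pow_add]
          congr 1
          omega
        linear_combination (-(q ^ Tsum m * qbinom q N m)) * hp
      · -- n = N + 1
        have hm : N = m := by omega
        subst hm
        rw [Gp_pascal, map_add, map_mul, map_pow, RatFunc.algebraMap_X, ← hq]
        have hGN : Gp N (N+1) = 0 := by
          rw [Gp]
          rw [show (range N).powersetCard (N+1) = ∅ by
            apply Finset.powersetCard_eq_empty.mpr
            simp]
          simp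
        rw [hGN, map_zero, zero_add, ih N le_rfl, qbinom_self, qbinom_self, hTs]
        ring

end QCatAux
namespace QCatAux

def PC (N n : ℕ) : Finset (Finset ℕ) := (range N).powersetCard n

def aa (N n s : ℕ) : ℕ := ((PC N n).filter (fun S => ∑ i ∈ S, i = s)).card

lemma Gp_coeff (N n s : ℕ) : (Gp N n).coeff s = (aa N n s : ℚ) := by
  rw [Gp, Polynomial.finset_sum_coeff, aa, Finset.card_filter]
  rw [Nat.cast_sum]
  apply sum_congr rfl
  intro S _
  rw [Polynomial.coeff_X_pow]
  by_cases h : (∑ i ∈ S, i) = s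
  · simp [h]
  · simp [h, Ne.symm h]

-- max sum bound
lemma sum_le_of_mem_PC {N n : ℕ} {S : Finset ℕ} (hS : S ∈ PC N n) :
    ∑ i ∈ S, i ≤ n * (N - 1) := by
  obtain ⟨hsub, hcard⟩ := mem_powersetCard.mp hS
  calc ∑ i ∈ S, i ≤ ∑ _i ∈ S, (N-1) := by
        apply Finset.sum_le_sum
        intro i hi
        have := Finset.mem_range.mp (hsub hi)
        omega
    _ = n * (N-1) := by rw [Finset.sum_const, hcard, smul_eq_mul]

lemma aa_eq_zero_of_gt {N n s : ℕ} (hs : n * (N-1) < s) : aa N n s = 0 := by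
  rw [aa, Finset.card_eq_zero, Finset.filter_eq_empty_iff]
  intro S hS h
  exact absurd (h ▸ sum_le_of_mem_PC hS) (by omega)

-- min sum bound
lemma Tsum_le_sum (S : Finset ℕ) : Tsum S.card ≤ ∑ i ∈ S, i := by
  induction S using Finset.strongInduction with
  | _ S ih =>
    rcases Finset.eq_empty_or_nonempty S with rfl | hne
    · simp [Tsum]
    · have hmax := S.max'_mem hne
      have hcard : 0 < S.card := Finset.card_pos.mpr hne
      have hsub : S ⊆ range (S.max' hne + 1) := by
        intro i hi
        exact Finset.mem_range.mpr (Nat.lt_succ_of_le (S.le_max' i hi))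
      have hle : S.card ≤ S.max' hne + 1 := by
        calc S.card ≤ (range (S.max' hne + 1)).card := Finset.card_le_card hsub
          _ = S.max' hne + 1 := Finset.card_range _
      have herase := ih (S.erase (S.max' hne)) (Finset.erase_ssubset hmax)
      have hcard' : (S.erase (S.max' hne)).card = S.card - 1 :=
        Finset.card_erase_of_mem hmax
      have hsum : ∑ i ∈ S, i = S.max' hne + ∑ i ∈ S.erase (S.max' hne), i :=
        (Finset.add_sum_erase S id hmax).symm
      rw [hsum]
      have hT : Tsum S.card = Tsum (S.card - 1) + (S.card - 1) := by
        conv_lhs => rw [show S.card = (S.card - 1) + 1 by omega]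
        rw [Tsum, Tsum, Finset.sum_range_succ]
      rw [hT]
      rw [hcard'] at herase
      omega

lemma aa_eq_zero_of_lt {N n s : ℕ} (hs : s < Tsum n) : aa N n s = 0 := by
  rw [aa, Finset.card_eq_zero, Finset.filter_eq_empty_iff]
  intro S hS h
  have hcard := (mem_powersetCard.mp hS).2
  have := Tsum_le_sum S
  rw [hcard, h] at this
  omega

-- symmetry
lemma aa_symm {N n s t : ℕ} (hn : n ≤ N) (hst : s + t = n * (N-1)) : aa N n s = aa N n t := by
  rw [aa, aa]
  apply Finset.card_bij (fun S _ => S.image (fun i => N - 1 - i))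
  · -- maps into
    intro S hS
    obtain ⟨hsub, hcard⟩ := mem_powersetCard.mp (Finset.mem_filter.mp hS).1
    have hsum := (Finset.mem_filter.mp hS).2
    have hinj : Set.InjOn (fun i => N - 1 - i) S := by
      intro i hi j hj hij
      have hi' := Finset.mem_range.mp (hsub hi)
      have hj' := Finset.mem_range.mp (hsub hj)
      simp only at hij
      omega
    rw [Finset.mem_filter]
    constructor
    · rw [PC, mem_powersetCard]
      constructor
      · intro x hx
        obtain ⟨i, hi, rfl⟩ := Finset.mem_image.mp hx
        have := Finset.mem_range.mp (hsub hi)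
        exact Finset.mem_range.mpr (by omega)
      · rw [Finset.card_image_of_injOn hinj, hcard]
    · rw [Finset.sum_image hinj]
      have key : ∑ i ∈ S, (N - 1 - i) + ∑ i ∈ S, i = n * (N - 1) := by
        rw [← Finset.sum_add_distrib]
        have : ∀ i ∈ S, (N - 1 - i) + i = N - 1 := by
          intro i hi
          have := Finset.mem_range.mp (hsub hi)
          omega
        rw [Finset.sum_congr rfl this, Finset.sum_const, hcard, smul_eq_mul]
      omega
  · -- injective
    intro S hS S' hS' h
    obtain ⟨hsub, _⟩ := mem_powersetCard.mp (Finset.mem_filter.mp hS).1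
    obtain ⟨hsub', _⟩ := mem_powersetCard.mp (Finset.mem_filter.mp hS').1
    ext i
    constructor
    · intro hi
      have hx : (N - 1 - i) ∈ S'.image (fun i => N - 1 - i) := by
        rw [← h]
        exact Finset.mem_image_of_mem _ hi
      obtain ⟨j, hj, hji⟩ := Finset.mem_image.mp hx
      have h1 := Finset.mem_range.mp (hsub hi)
      have h2 := Finset.mem_range.mp (hsub' hj)
      have : j = i := by omega
      exact this ▸ hj
    · intro hi
      have hx : (N - 1 - i) ∈ S.image (fun i => N - 1 - i) := by
        rw [h]
        exact Finset.mem_image_of_mem _ hi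
      obtain ⟨j, hj, hji⟩ := Finset.mem_image.mp hx
      have h1 := Finset.mem_range.mp (hsub' hi)
      have h2 := Finset.mem_range.mp (hsub hj)
      have : j = i := by omega
      exact this ▸ hj
  · -- surjective
    intro T hT
    obtain ⟨hsub, hcard⟩ := mem_powersetCard.mp (Finset.mem_filter.mp hT).1
    have hsum := (Finset.mem_filter.mp hT).2
    refine ⟨T.image (fun i => N - 1 - i), ?_, ?_⟩
    · have hinj : Set.InjOn (fun i => N - 1 - i) T := by
        intro i hi j hj hij
        have hi' := Finset.mem_range.mp (hsub hi)
        have hj' := Finset.mem_range.mp (hsub hj)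
        simp only at hij
        omega
      rw [Finset.mem_filter]
      constructor
      · rw [PC, mem_powersetCard]
        constructor
        · intro x hx
          obtain ⟨i, hi, rfl⟩ := Finset.mem_image.mp hx
          have := Finset.mem_range.mp (hsub hi)
          exact Finset.mem_range.mpr (by omega)
        · rw [Finset.card_image_of_injOn hinj, hcard]
      · rw [Finset.sum_image hinj]
        have key : ∑ i ∈ T, (N - 1 - i) + ∑ i ∈ T, i = n * (N - 1) := by
          rw [← Finset.sum_add_distrib]
          have : ∀ i ∈ T, (N - 1 - i) + i = N - 1 := by
            intro i hi
            have := Finset.mem_range.mp (hsub hi)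
            omega
          rw [Finset.sum_congr rfl this, Finset.sum_const, hcard, smul_eq_mul]
        omega
    · -- double image is identity
      rw [Finset.image_image]
      have hcong : Set.EqOn ((fun i => N - 1 - i) ∘ (fun i => N - 1 - i)) id ↑T := by
        intro i hi
        have := Finset.mem_range.mp (hsub (Finset.mem_coe.mp hi))
        simp only [Function.comp_apply, id_eq]
        omega
      rw [Finset.image_congr hcong, Finset.image_id]

end QCatAux
namespace QCatAux

def sumZ (N : ℕ) (S : Finset ℕ) : ZMod N := ∑ i ∈ S, (i : ZMod N)

def Er (N n : ℕ) (r : ZMod N) : ℕ := ((PC N n).filter (fun S => sumZ N S = r)).card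

lemma mod_lemma1 {N i : ℕ} (hN : 0 < N) (hi : i < N) : ((i+1) % N + (N-1)) % N = i := by
  rcases Nat.lt_or_ge (i+1) N with h | h
  · rw [Nat.mod_eq_of_lt h]
    rw [show i + 1 + (N-1) = i + N by omega, Nat.add_mod_right, Nat.mod_eq_of_lt hi]
  · have : i + 1 = N := by omega
    rw [this, Nat.mod_self, Nat.zero_add, Nat.mod_eq_of_lt (by omega)]
    omega

lemma mod_lemma2 {N i : ℕ} (hN : 0 < N) (hi : i < N) : ((i + (N-1)) % N + 1) % N = i := by
  rcases Nat.lt_or_ge i 1 with h | h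
  · have : i = 0 := by omega
    subst this
    rw [Nat.zero_add, Nat.mod_eq_of_lt (show N - 1 < N by omega)]
    rw [show N - 1 + 1 = N by omega, Nat.mod_self]
  · rw [show i + (N-1) = (i - 1) + N by omega, Nat.add_mod_right]
    rw [Nat.mod_eq_of_lt (show i - 1 < N by omega)]
    rw [show i - 1 + 1 = i by omega, Nat.mod_eq_of_lt hi]

lemma shift_injOn {N : ℕ} (hN : 0 < N) {S : Finset ℕ} (hsub : S ⊆ range N) :
    Set.InjOn (fun i => (i+1) % N) S := by
  intro i hi j hj hij
  have h1 := Finset.mem_range.mp (hsub (Finset.mem_coe.mp hi))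
  have h2 := Finset.mem_range.mp (hsub (Finset.mem_coe.mp hj))
  simp only at hij
  have := congrArg (fun x => (x + (N-1)) % N) hij
  rwa [mod_lemma1 hN h1, mod_lemma1 hN h2] at this

lemma shift_injOn' {N : ℕ} (hN : 0 < N) {S : Finset ℕ} (hsub : S ⊆ range N) :
    Set.InjOn (fun i => (i + (N-1)) % N) S := by
  intro i hi j hj hij
  have h1 := Finset.mem_range.mp (hsub (Finset.mem_coe.mp hi))
  have h2 := Finset.mem_range.mp (hsub (Finset.mem_coe.mp hj))
  simp only at hij
  have := congrArg (fun x => (x + 1) % N) hij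
  rwa [mod_lemma2 hN h1, mod_lemma2 hN h2] at this

lemma Er_shift (N n : ℕ) (hN : 0 < N) (r : ZMod N) : Er N n r = Er N n (r + n) := by
  rw [Er, Er]
  apply Finset.card_nbij' (fun S => S.image (fun i => (i+1) % N))
    (fun S => S.image (fun i => (i + (N-1)) % N))
  · -- maps forward
    intro S hS
    rw [Finset.mem_coe, Finset.mem_filter] at hS ⊢
    obtain ⟨hPC, hsum⟩ := hS
    obtain ⟨hsub, hcard⟩ := mem_powersetCard.mp hPC
    refine ⟨mem_powersetCard.mpr ⟨?_, ?_⟩, ?_⟩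
    · intro x hx
      obtain ⟨i, hi, rfl⟩ := Finset.mem_image.mp hx
      exact Finset.mem_range.mpr (Nat.mod_lt _ hN)
    · rw [Finset.card_image_of_injOn (shift_injOn hN hsub), hcard]
    · rw [sumZ, Finset.sum_image (shift_injOn hN hsub)]
      rw [← hsum, sumZ]
      have : ∀ i ∈ S, (((i+1) % N : ℕ) : ZMod N) = (i : ZMod N) + 1 := by
        intro i hi
        rw [ZMod.natCast_mod]
        push_cast
        ring
      rw [Finset.sum_congr rfl this, Finset.sum_add_distrib, Finset.sum_const, hcard]
      simp
  · -- maps backward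
    intro S hS
    rw [Finset.mem_coe, Finset.mem_filter] at hS ⊢
    obtain ⟨hPC, hsum⟩ := hS
    obtain ⟨hsub, hcard⟩ := mem_powersetCard.mp hPC
    refine ⟨mem_powersetCard.mpr ⟨?_, ?_⟩, ?_⟩
    · intro x hx
      obtain ⟨i, hi, rfl⟩ := Finset.mem_image.mp hx
      exact Finset.mem_range.mpr (Nat.mod_lt _ hN)
    · rw [Finset.card_image_of_injOn (shift_injOn' hN hsub), hcard]
    · rw [sumZ, Finset.sum_image (shift_injOn' hN hsub)]
      have : ∀ i ∈ S, (((i + (N-1)) % N : ℕ) : ZMod N) = (i : ZMod N) - 1 := by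
        intro i hi
        rw [ZMod.natCast_mod]
        push_cast
        have hc : ((N : ℕ) : ZMod N) = 0 := ZMod.natCast_self N
        have h1 : ((N - 1 : ℕ) : ZMod N) = -1 := by
          rw [show N - 1 = N - 1 from rfl]
          have : ((N - 1 : ℕ) : ZMod N) + 1 = 0 := by
            rw [show (1 : ZMod N) = ((1:ℕ) : ZMod N) by push_cast; ring]
            rw [← Nat.cast_add, show N - 1 + 1 = N by omega, hc]
          linear_combination this
        rw [h1]
        ring
      rw [Finset.sum_congr rfl this, Finset.sum_sub_distrib, Finset.sum_const, hcard]
      rw [← sumZ, hsum]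
      simp
  · -- left inverse
    intro S hS
    rw [Finset.mem_coe, Finset.mem_filter] at hS
    obtain ⟨hsub, hcard⟩ := mem_powersetCard.mp hS.1
    beta_reduce
    rw [Finset.image_image]
    have hcong : Set.EqOn ((fun i => (i + (N-1)) % N) ∘ (fun i => (i+1) % N)) id ↑S := by
      intro i hi
      have := Finset.mem_range.mp (hsub (Finset.mem_coe.mp hi))
      simp only [Function.comp_apply, id_eq]
      exact mod_lemma1 hN this
    rw [Finset.image_congr hcong, Finset.image_id]
  · -- right inverse
    intro S hS
    rw [Finset.mem_coe, Finset.mem_filter] at hS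
    obtain ⟨hsub, hcard⟩ := mem_powersetCard.mp hS.1
    beta_reduce
    rw [Finset.image_image]
    have hcong : Set.EqOn ((fun i => (i+1) % N) ∘ (fun i => (i + (N-1)) % N)) id ↑S := by
      intro i hi
      have := Finset.mem_range.mp (hsub (Finset.mem_coe.mp hi))
      simp only [Function.comp_apply, id_eq]
      exact mod_lemma2 hN this
    rw [Finset.image_congr hcong, Finset.image_id]

lemma Er_shift_iter (N n : ℕ) (hN : 0 < N) (k : ℕ) (r : ZMod N) :
    Er N n r = Er N n (r + (n : ZMod N) * (k : ZMod N)) := by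
  induction k with
  | zero => simp
  | succ k ih =>
    rw [ih, Er_shift N n hN (r + (n : ZMod N) * (k : ZMod N))]
    congr 1
    push_cast
    ring

lemma Er_const (N n : ℕ) (hN : 0 < N) (h : Nat.Coprime n N) (r r' : ZMod N) :
    Er N n r = Er N n r' := by
  haveI : NeZero N := ⟨by omega⟩
  set u : (ZMod N)ˣ := ZMod.unitOfCoprime n h with hu
  set k : ZMod N := ((u⁻¹ : (ZMod N)ˣ) : ZMod N) * (r' - r) with hk
  rw [Er_shift_iter N n hN k.val r]
  congr 1
  rw [ZMod.natCast_val, ZMod.cast_id]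
  have hun : ((u : (ZMod N)ˣ) : ZMod N) = (n : ZMod N) := ZMod.coe_unitOfCoprime n h
  rw [hk, ← hun]
  have : ((u : (ZMod N)ˣ) : ZMod N) * (((u⁻¹ : (ZMod N)ˣ) : ZMod N) * (r' - r)) = r' - r := by
    rw [← mul_assoc]
    norm_cast
    rw [mul_inv_cancel]
    simp
  rw [this]
  ring

lemma Er_eq_sum (N n : ℕ) (ρ : ZMod N) :
    Er N n ρ = ∑ s ∈ range (n*(N-1)+1), (if ((s : ZMod N) = ρ) then aa N n s else 0) := by
  rw [Er]
  rw [Finset.card_eq_sum_card_fiberwise (f := fun S => ∑ i ∈ S, i)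
    (t := range (n*(N-1)+1))]
  · apply sum_congr rfl
    intro s _
    rw [Finset.filter_filter]
    by_cases hc : ((s : ZMod N) = ρ)
    · rw [if_pos hc, aa]
      congr 1
      apply Finset.filter_congr
      intro S hS
      constructor
      · intro h'
        exact h'.2
      · intro h'
        refine ⟨?_, h'⟩
        rw [sumZ, ← hc, ← h']
        push_cast
        rfl
    · rw [if_neg hc]
      rw [Finset.card_eq_zero, Finset.filter_eq_empty_iff]
      intro S hS hcon
      apply hc
      rw [← hcon.2, ← hcon.1, sumZ]
      push_cast
      rfl
  · intro S hS
    rw [Finset.mem_coe, Finset.mem_filter] at hS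
    exact Finset.mem_range.mpr (Nat.lt_succ_of_le (sum_le_of_mem_PC hS.1))

end QCatAux
namespace QCatAux

def AA (N n k : ℕ) : ℕ :=
  ∑ s ∈ range (k+1), if ((s : ZMod N) = (k : ZMod N)) then aa N n s else 0

lemma cast_eq_iff_dvd {N a b : ℕ} (h : a ≤ b) :
    ((a : ZMod N) = (b : ZMod N)) ↔ N ∣ (b - a) := by
  rw [ZMod.natCast_eq_natCast_iff, Nat.modEq_iff_dvd' h]

lemma AA_lt {N n k : ℕ} (hk : k < N) : AA N n k = aa N n k := by
  rw [AA, Finset.sum_range_succ, if_pos rfl]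
  rw [Finset.sum_eq_zero, zero_add]
  intro s hs
  have hs' := Finset.mem_range.mp hs
  rw [if_neg]
  intro hc
  have hd := (cast_eq_iff_dvd (le_of_lt hs')).mp hc
  have := Nat.eq_zero_of_dvd_of_lt hd (by omega)
  omega

lemma AA_rec {N n k : ℕ} (h0 : 0 < N) (hk : N ≤ k) : AA N n k = aa N n k + AA N n (k - N) := by
  rw [AA, Finset.range_eq_Ico, ← Finset.sum_Ico_consecutive _ (Nat.zero_le (k-N+1)) (by omega)]
  have hmid : ∑ s ∈ Finset.Ico (k-N+1) (k+1), (if ((s : ZMod N) = (k : ZMod N)) then aa N n s else 0) = aa N n k := by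
    rw [Finset.sum_Ico_succ_top (by omega), if_pos rfl]
    rw [Finset.sum_eq_zero, zero_add]
    intro s hs
    obtain ⟨hs1, hs2⟩ := Finset.mem_Ico.mp hs
    rw [if_neg]
    intro hc
    have hd := (cast_eq_iff_dvd (by omega : s ≤ k)).mp hc
    have := Nat.eq_zero_of_dvd_of_lt hd (by omega)
    omega
  have hlow : ∑ s ∈ Finset.Ico 0 (k-N+1), (if ((s : ZMod N) = (k : ZMod N)) then aa N n s else 0)
      = AA N n (k - N) := by
    rw [AA, Finset.range_eq_Ico]
    apply Finset.sum_congr rfl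
    intro s _
    have hciff : ((s : ZMod N) = (k : ZMod N)) ↔ ((s : ZMod N) = ((k - N : ℕ) : ZMod N)) := by
      have : ((k : ℕ) : ZMod N) = ((k - N : ℕ) : ZMod N) := by
        conv_lhs => rw [show k = (k - N) + N by omega]
        push_cast [ZMod.natCast_self]
        ring
      rw [this]
    rw [if_congr hciff rfl rfl]
  rw [hmid, hlow]
  ring

lemma AA_stable {N n k : ℕ} (hk : n * (N-1) ≤ k) : AA N n k = Er N n (k : ZMod N) := by
  rw [Er_eq_sum, AA]
  rw [Finset.range_eq_Ico, ← Finset.sum_Ico_consecutive _ (Nat.zero_le (n*(N-1)+1)) (by omega)]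
  rw [← Finset.range_eq_Ico]
  have : ∑ s ∈ Finset.Ico (n*(N-1)+1) (k+1), (if ((s : ZMod N) = (k : ZMod N)) then aa N n s else 0) = 0 := by
    apply Finset.sum_eq_zero
    intro s hs
    obtain ⟨hs1, _⟩ := Finset.mem_Ico.mp hs
    rw [aa_eq_zero_of_gt (by omega)]
    simp
  rw [this, add_zero]

-- reflection identity
lemma AA_reflect {N n j : ℕ} (hn : n ≤ N) (hj : j ≤ n * (N-1)) :
    Er N n (((n*(N-1) - j : ℕ) : ZMod N)) + aa N n j = AA N n (n*(N-1) - j) + AA N n j := by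
  set M := n * (N-1) with hM
  rw [Er_eq_sum]
  rw [Finset.range_eq_Ico, ← Finset.sum_Ico_consecutive _ (Nat.zero_le (M-j+1)) (by omega)]
  rw [← Finset.range_eq_Ico]
  have h1 : ∑ s ∈ range (M-j+1), (if ((s : ZMod N) = ((M - j : ℕ) : ZMod N)) then aa N n s else 0)
      = AA N n (M - j) := rfl
  have h2 : ∑ s ∈ Finset.Ico (M-j+1) (M+1), (if ((s : ZMod N) = ((M - j : ℕ) : ZMod N)) then aa N n s else 0)
      = ∑ t ∈ range j, (if ((t : ZMod N) = (j : ZMod N)) then aa N n t else 0) := by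
    apply Finset.sum_nbij' (fun s => M - s) (fun t => M - t)
    · intro s hs
      obtain ⟨hs1, hs2⟩ := Finset.mem_Ico.mp hs
      exact Finset.mem_range.mpr (by omega)
    · intro t ht
      have ht' := Finset.mem_range.mp ht
      exact Finset.mem_Ico.mpr ⟨by omega, by omega⟩
    · intro s hs
      obtain ⟨hs1, hs2⟩ := Finset.mem_Ico.mp hs
      omega
    · intro t ht
      have ht' := Finset.mem_range.mp ht
      omega
    · intro s hs
      obtain ⟨hs1, hs2⟩ := Finset.mem_Ico.mp hs
      have hcond : ((s : ZMod N) = ((M - j : ℕ) : ZMod N)) ↔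
          (((M - s : ℕ) : ZMod N) = (j : ZMod N)) := by
        rw [Nat.cast_sub (by omega : s ≤ M), Nat.cast_sub (by omega : j ≤ M)]
        constructor
        · intro h; rw [h]; ring
        · intro h; linear_combination -h
      rw [if_congr hcond rfl rfl]
      rw [aa_symm hn (by omega : s + (M - s) = n*(N-1))]
  rw [h1, h2]
  have h3 : AA N n j = (∑ t ∈ range j, (if ((t : ZMod N) = (j : ZMod N)) then aa N n t else 0)) + aa N n j := by
    rw [AA, Finset.sum_range_succ, if_pos rfl]
  rw [h3]
  ring

-- monotonicity of AA given unimodality of aa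
lemma AA_mono {N n : ℕ} (hN : 0 < N) (hmono : ∀ s, 2*s + 1 ≤ n*(N-1) → aa N n s ≤ aa N n (s+1)) :
    ∀ k, 2*k + 1 ≤ n*(N-1) → AA N n k ≤ AA N n (k+1) := by
  intro k
  induction k using Nat.strong_induction_on with
  | _ k ih =>
    intro hk
    rcases Nat.lt_or_ge (k+1) N with h1 | h1
    · rw [AA_lt (by omega), AA_lt h1]
      exact hmono k hk
    · rcases Nat.lt_or_ge k N with h2 | h2
      · -- k+1 = N
        rw [AA_lt h2, AA_rec hN h1]
        have := hmono k hk
        omega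
      · rw [AA_rec hN h1, AA_rec hN h2]
        have e1 : k + 1 - N = (k - N) + 1 := by omega
        rw [e1]
        have := ih (k - N) (by omega) (by omega)
        have := hmono k hk
        omega

end QCatAux
namespace QCatAux

noncomputable def Emap (N : ℕ) (v : Finset ℕ → ℚ) : Finset ℕ → ℚ :=
  fun T => ∑ i ∈ range (N-1),
    (if (i+1 ∈ T ∧ i ∉ T) then ((i:ℚ)+1) * v (insert i (T.erase (i+1))) else 0)

noncomputable def Fmap (N : ℕ) (v : Finset ℕ → ℚ) : Finset ℕ → ℚ :=
  fun T => ∑ j ∈ range N,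
    (if (j-1 ∈ T ∧ j ∉ T) then ((N:ℚ) - j) * v (insert j (T.erase (j-1))) else 0)

-- commuting two disjoint moves
lemma set_comm {T : Finset ℕ} {i j : ℕ} (hj1 : 1 ≤ j) (h1 : j ≠ i) (h2 : j ≠ i+1) (h3 : j ≠ i+2) :
    insert j ((insert i (T.erase (i+1))).erase (j-1))
      = insert i ((insert j (T.erase (j-1))).erase (i+1)) := by
  ext x
  simp only [Finset.mem_insert, Finset.mem_erase]
  constructor
  · rintro (rfl | ⟨hx1, rfl | ⟨hx2, hx3⟩⟩)
    · exact Or.inr ⟨by omega, Or.inl rfl⟩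
    · exact Or.inl rfl
    · exact Or.inr ⟨hx2, Or.inr ⟨hx1, hx3⟩⟩
  · rintro (rfl | ⟨hx1, rfl | ⟨hx2, hx3⟩⟩)
    · exact Or.inr ⟨by omega, Or.inl rfl⟩
    · exact Or.inl rfl
    · exact Or.inr ⟨hx2, Or.inr ⟨hx1, hx3⟩⟩

-- the pointwise (i,j)-term difference
lemma ABdiff (N : ℕ) (v : Finset ℕ → ℚ) (T : Finset ℕ) (i j : ℕ) :
    (if (i+1 ∈ T ∧ i ∉ T) then
      (if (j-1 ∈ insert i (T.erase (i+1)) ∧ j ∉ insert i (T.erase (i+1))) then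
        ((i:ℚ)+1) * ((N:ℚ) - j) * v (insert j ((insert i (T.erase (i+1))).erase (j-1)))
       else 0) else 0)
    - (if (j-1 ∈ T ∧ j ∉ T) then
      (if (i+1 ∈ insert j (T.erase (j-1)) ∧ i ∉ insert j (T.erase (j-1))) then
        ((i:ℚ)+1) * ((N:ℚ) - j) * v (insert i ((insert j (T.erase (j-1))).erase (i+1)))
       else 0) else 0)
    = if j = i+1 then
        ((i:ℚ)+1) * ((N:ℚ) - j) *
          ((if (i+1 ∈ T ∧ i ∉ T) then 1 else 0) - (if (i ∈ T ∧ i+1 ∉ T) then 1 else 0)) * v T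
      else 0 := by
  by_cases hj0 : j = 0
  · subst hj0
    have hA : ¬ ((0:ℕ)-1 ∈ insert i (T.erase (i+1)) ∧ 0 ∉ insert i (T.erase (i+1))) := by
      simp only [Nat.zero_sub]
      tauto
    have hB : ¬ ((0:ℕ)-1 ∈ T ∧ 0 ∉ T) := by
      simp only [Nat.zero_sub]
      tauto
    rw [if_neg hA, ite_self, if_neg hB, if_neg (show ¬ (0:ℕ) = i+1 by omega)]
    ring
  by_cases hji : j = i + 1
  · subst hji
    rw [if_pos rfl]
    simp only [Nat.add_sub_cancel]
    by_cases hC : (i+1 ∈ T ∧ i ∉ T)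
    · rw [if_pos hC]
      have hD : ¬ (i ∈ T ∧ i+1 ∉ T) := fun h => h.2 hC.1
      rw [if_pos hC, if_neg hD]
      have hin : i ∈ insert i (T.erase (i+1)) ∧ i+1 ∉ insert i (T.erase (i+1)) := by
        constructor
        · exact Finset.mem_insert_self i _
        · simp only [Finset.mem_insert, Finset.mem_erase]
          push_neg
          exact ⟨by omega, fun h => absurd rfl h⟩
      rw [if_pos hin]
      have hset : insert (i+1) ((insert i (T.erase (i+1))).erase i) = T := by
        rw [Finset.erase_insert (by simp [hC.2]), Finset.insert_erase hC.1]
      rw [hset]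
      have hBout : ¬ (i ∈ T ∧ i + 1 ∉ T) := hD
      rw [if_neg hBout]
      ring
    · rw [if_neg hC, if_neg hC]
      by_cases hD : (i ∈ T ∧ i+1 ∉ T)
      · rw [if_pos hD]
        have hin : i+1 ∈ insert (i+1) (T.erase i) ∧ i ∉ insert (i+1) (T.erase i) := by
          constructor
          · exact Finset.mem_insert_self _ _
          · simp only [Finset.mem_insert, Finset.mem_erase]
            push_neg
            exact ⟨by omega, fun h => absurd rfl h⟩
        rw [if_pos hin]
        have hset : insert i ((insert (i+1) (T.erase i)).erase (i+1)) = T := by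
          rw [Finset.erase_insert (by simp [hD.2]), Finset.insert_erase hD.1]
        rw [hset, if_pos hD]
        ring
      · rw [if_neg hD, if_neg hD]
        ring
  rw [if_neg hji]
  by_cases hjieq : j = i
  · subst hjieq
    have hA : ¬ (j-1 ∈ insert j (T.erase (j+1)) ∧ j ∉ insert j (T.erase (j+1))) :=
      fun h => h.2 (Finset.mem_insert_self _ _)
    have hB : ¬ (j+1 ∈ insert j (T.erase (j-1)) ∧ j ∉ insert j (T.erase (j-1))) :=
      fun h => h.2 (Finset.mem_insert_self _ _)
    rw [if_neg hA, if_neg hB, ite_self, ite_self]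
    ring
  by_cases hji2 : j = i + 2
  · subst hji2
    have hA : ¬ ((i:ℕ)+2-1 ∈ insert i (T.erase (i+1)) ∧ i+2 ∉ insert i (T.erase (i+1))) := by
      rw [show (i:ℕ)+2-1 = i+1 by omega]
      intro h
      have := h.1
      simp only [Finset.mem_insert, Finset.mem_erase] at this
      rcases this with h' | ⟨h', _⟩ <;> omega
    have hB : ¬ (i+1 ∈ insert (i+2) (T.erase (i+2-1)) ∧ i ∉ insert (i+2) (T.erase (i+2-1))) := by
      rw [show (i:ℕ)+2-1 = i+1 by omega]
      intro h
      have := h.1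
      simp only [Finset.mem_insert, Finset.mem_erase] at this
      rcases this with h' | ⟨h', _⟩ <;> omega
    rw [if_neg hA, if_neg hB, ite_self, ite_self]
    ring
  -- disjoint moves
  have hj1 : 1 ≤ j := by omega
  have hiff1 : (j-1 ∈ insert i (T.erase (i+1)) ∧ j ∉ insert i (T.erase (i+1)))
      ↔ (j-1 ∈ T ∧ j ∉ T) := by
    simp only [Finset.mem_insert, Finset.mem_erase]
    constructor
    · rintro ⟨h1' | ⟨_, h1'⟩, h2'⟩
      · omega
      · refine ⟨h1', fun hjT => h2' (Or.inr ⟨by omega, hjT⟩)⟩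
    · rintro ⟨h1', h2'⟩
      refine ⟨Or.inr ⟨by omega, h1'⟩, ?_⟩
      push_neg
      exact ⟨by omega, fun _ => h2'⟩
  have hiff2 : (i+1 ∈ insert j (T.erase (j-1)) ∧ i ∉ insert j (T.erase (j-1)))
      ↔ (i+1 ∈ T ∧ i ∉ T) := by
    simp only [Finset.mem_insert, Finset.mem_erase]
    constructor
    · rintro ⟨h1' | ⟨_, h1'⟩, h2'⟩
      · omega
      · refine ⟨h1', fun hiT => h2' (Or.inr ⟨by omega, hiT⟩)⟩
    · rintro ⟨h1', h2'⟩
      refine ⟨Or.inr ⟨by omega, h1'⟩, ?_⟩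
      push_neg
      exact ⟨by omega, fun _ => h2'⟩
  have hset : insert j ((insert i (T.erase (i+1))).erase (j-1))
      = insert i ((insert j (T.erase (j-1))).erase (i+1)) :=
    set_comm hj1 (by omega) (by omega) (by omega)
  by_cases hC : (i+1 ∈ T ∧ i ∉ T) <;> by_cases hD : (j-1 ∈ T ∧ j ∉ T)
  · rw [if_pos hC, if_pos hD, if_pos (hiff1.mpr hD), if_pos (hiff2.mpr hC), hset]
    ring
  · rw [if_pos hC, if_neg hD, if_neg (fun h => hD (hiff1.mp h))]
    norm_num
  · rw [if_neg hC, if_pos hD, if_neg (fun h => hC (hiff2.mp h))]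
    norm_num
  · rw [if_neg hC, if_neg hD]
    norm_num

end QCatAux
namespace QCatAux

lemma indicator_diff (T : Finset ℕ) (i : ℕ) :
    ((if (i+1 ∈ T ∧ i ∉ T) then (1:ℚ) else 0) - (if (i ∈ T ∧ i+1 ∉ T) then (1:ℚ) else 0))
      = (if i+1 ∈ T then (1:ℚ) else 0) - (if i ∈ T then (1:ℚ) else 0) := by
  by_cases h1 : i+1 ∈ T <;> by_cases h2 : i ∈ T <;>
    simp [h1, h2]

lemma telescope (N n : ℕ) (hN : 0 < N) (T : Finset ℕ) (hT : T ∈ PC N n) :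
    ∑ i ∈ range (N-1), ((i:ℚ)+1) * ((N:ℚ) - (i+1)) *
      ((if i+1 ∈ T then (1:ℚ) else 0) - (if i ∈ T then (1:ℚ) else 0))
    = 2 * (∑ i ∈ T, (i:ℚ)) - ((n*(N-1) : ℕ) : ℚ) := by
  obtain ⟨hsub, hcard⟩ := mem_powersetCard.mp hT
  have split : ∀ i ∈ range (N-1), ((i:ℚ)+1) * ((N:ℚ) - (i+1)) *
      ((if i+1 ∈ T then (1:ℚ) else 0) - (if i ∈ T then (1:ℚ) else 0))
      = (if i+1 ∈ T then ((i:ℚ)+1) * ((N:ℚ) - (i+1)) else 0)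
        - (if i ∈ T then ((i:ℚ)+1) * ((N:ℚ) - (i+1)) else 0) := by
    intro i _
    by_cases h1 : i+1 ∈ T <;> by_cases h2 : i ∈ T <;> simp [h1, h2] <;> ring
  rw [Finset.sum_congr rfl split, Finset.sum_sub_distrib]
  have e1 : ∑ i ∈ range (N-1), (if i+1 ∈ T then ((i:ℚ)+1) * ((N:ℚ) - (i+1)) else 0)
      = ∑ t ∈ T, (t:ℚ) * ((N:ℚ) - t) := by
    have := Finset.sum_Ico_eq_sum_range
      (f := fun t => if t ∈ T then (t:ℚ) * ((N:ℚ) - t) else 0) (m := 1) (n := N)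
    rw [show N - 1 = N - 1 from rfl] at this
    calc ∑ i ∈ range (N-1), (if i+1 ∈ T then ((i:ℚ)+1) * ((N:ℚ) - (i+1)) else 0)
        = ∑ i ∈ range (N-1), (if 1+i ∈ T then ((1+i : ℕ):ℚ) * ((N:ℚ) - ((1+i:ℕ):ℚ)) else 0) := by
          apply Finset.sum_congr rfl
          intro i _
          rw [show 1+i = i+1 by omega]
          push_cast
          ring_nf
      _ = ∑ t ∈ Finset.Ico 1 N, (if t ∈ T then (t:ℚ) * ((N:ℚ) - t) else 0) := by
          rw [this]
      _ = ∑ t ∈ range N, (if t ∈ T then (t:ℚ) * ((N:ℚ) - t) else 0) := by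
          rw [Finset.range_eq_Ico, ← Finset.sum_Ico_consecutive _ (Nat.zero_le 1) (by omega)]
          have : ∑ t ∈ Finset.Ico 0 1, (if t ∈ T then (t:ℚ) * ((N:ℚ) - t) else 0) = 0 := by
            rw [show Finset.Ico 0 1 = {0} from rfl, Finset.sum_singleton]
            by_cases h0 : 0 ∈ T <;> simp [h0]
          rw [this, zero_add]
      _ = ∑ t ∈ T, (t:ℚ) * ((N:ℚ) - t) := by
          rw [Finset.sum_ite_mem, Finset.inter_eq_right.mpr hsub]
  have e2 : ∑ i ∈ range (N-1), (if i ∈ T then ((i:ℚ)+1) * ((N:ℚ) - (i+1)) else 0)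
      = ∑ t ∈ T, ((t:ℚ)+1) * ((N:ℚ) - (t+1)) := by
    calc ∑ i ∈ range (N-1), (if i ∈ T then ((i:ℚ)+1) * ((N:ℚ) - (i+1)) else 0)
        = ∑ i ∈ range N, (if i ∈ T then ((i:ℚ)+1) * ((N:ℚ) - (i+1)) else 0) := by
          rw [show N = (N-1) + 1 by omega, Finset.sum_range_succ,
            show (N-1) + 1 = N by omega]
          have hz : (N:ℚ) - ((((N-1):ℕ):ℚ)+1) = 0 := by
            push_cast [Nat.cast_sub (by omega : 1 ≤ N)]
            ring
          have htop : (if N-1 ∈ T then ((((N-1):ℕ):ℚ)+1) * ((N:ℚ) - ((((N-1):ℕ):ℚ)+1)) else 0) = 0 := by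
            rw [hz, mul_zero, ite_self]
          rw [htop, add_zero]
      _ = ∑ t ∈ T, ((t:ℚ)+1) * ((N:ℚ) - (t+1)) := by
          rw [Finset.sum_ite_mem, Finset.inter_eq_right.mpr hsub]
  rw [e1, e2, ← Finset.sum_sub_distrib]
  have e3 : ∀ t ∈ T, (t:ℚ) * ((N:ℚ) - t) - ((t:ℚ)+1) * ((N:ℚ) - (t+1))
      = 2*(t:ℚ) + (1 - (N:ℚ)) := by
    intro t _
    ring
  rw [Finset.sum_congr rfl e3, Finset.sum_add_distrib, Finset.sum_const, hcard, ← Finset.mul_sum]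
  push_cast [Nat.cast_sub (by omega : 1 ≤ N), nsmul_eq_mul]
  ring

end QCatAux
namespace QCatAux

lemma comm_lemma (N n : ℕ) (hN : 0 < N) (v : Finset ℕ → ℚ) (T : Finset ℕ) (hT : T ∈ PC N n) :
    Emap N (Fmap N v) T - Fmap N (Emap N v) T
      = (2 * (∑ i ∈ T, (i:ℚ)) - ((n*(N-1) : ℕ) : ℚ)) * v T := by
  have hA : Emap N (Fmap N v) T = ∑ i ∈ range (N-1), ∑ j ∈ range N,
      (if (i+1 ∈ T ∧ i ∉ T) then
        (if (j-1 ∈ insert i (T.erase (i+1)) ∧ j ∉ insert i (T.erase (i+1))) then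
          ((i:ℚ)+1) * ((N:ℚ) - j) * v (insert j ((insert i (T.erase (i+1))).erase (j-1)))
         else 0) else 0) := by
    rw [Emap]
    apply Finset.sum_congr rfl
    intro i _
    by_cases hC : (i+1 ∈ T ∧ i ∉ T)
    · simp only [if_pos hC, Fmap, Finset.mul_sum]
      apply Finset.sum_congr rfl
      intro j _
      by_cases hD : (j-1 ∈ insert i (T.erase (i+1)) ∧ j ∉ insert i (T.erase (i+1)))
      · rw [if_pos hD, if_pos hD]
        ring
      · rw [if_neg hD, if_neg hD, mul_zero]
    · simp only [if_neg hC, Finset.sum_const_zero]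
  have hB : Fmap N (Emap N v) T = ∑ i ∈ range (N-1), ∑ j ∈ range N,
      (if (j-1 ∈ T ∧ j ∉ T) then
        (if (i+1 ∈ insert j (T.erase (j-1)) ∧ i ∉ insert j (T.erase (j-1))) then
          ((i:ℚ)+1) * ((N:ℚ) - j) * v (insert i ((insert j (T.erase (j-1))).erase (i+1)))
         else 0) else 0) := by
    rw [Finset.sum_comm, Fmap]
    apply Finset.sum_congr rfl
    intro j _
    by_cases hD : (j-1 ∈ T ∧ j ∉ T)
    · simp only [if_pos hD, Emap, Finset.mul_sum]
      apply Finset.sum_congr rfl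
      intro i _
      by_cases hC : (i+1 ∈ insert j (T.erase (j-1)) ∧ i ∉ insert j (T.erase (j-1)))
      · rw [if_pos hC, if_pos hC]
        ring
      · rw [if_neg hC, if_neg hC, mul_zero]
    · simp only [if_neg hD, Finset.sum_const_zero]
  rw [hA, hB, ← Finset.sum_sub_distrib]
  have keyi : ∀ i ∈ range (N-1),
      (∑ j ∈ range N,
      (if (i+1 ∈ T ∧ i ∉ T) then
        (if (j-1 ∈ insert i (T.erase (i+1)) ∧ j ∉ insert i (T.erase (i+1))) then
          ((i:ℚ)+1) * ((N:ℚ) - j) * v (insert j ((insert i (T.erase (i+1))).erase (j-1)))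
         else 0) else 0))
      - (∑ j ∈ range N,
      (if (j-1 ∈ T ∧ j ∉ T) then
        (if (i+1 ∈ insert j (T.erase (j-1)) ∧ i ∉ insert j (T.erase (j-1))) then
          ((i:ℚ)+1) * ((N:ℚ) - j) * v (insert i ((insert j (T.erase (j-1))).erase (i+1)))
         else 0) else 0))
      = (((i:ℚ)+1) * ((N:ℚ) - (i+1)) *
          ((if i+1 ∈ T then (1:ℚ) else 0) - (if i ∈ T then (1:ℚ) else 0))) * v T := by
    intro i hi
    rw [← Finset.sum_sub_distrib]
    rw [Finset.sum_congr rfl (fun j _ => ABdiff N v T i j)]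
    rw [Finset.sum_ite_eq' (range N) (i+1)
      (fun j => ((i:ℚ)+1) * ((N:ℚ) - j) *
        ((if (i+1 ∈ T ∧ i ∉ T) then (1:ℚ) else 0) - (if (i ∈ T ∧ i+1 ∉ T) then (1:ℚ) else 0)) * v T)]
    rw [if_pos (Finset.mem_range.mpr (by
      have := Finset.mem_range.mp hi
      omega))]
    rw [indicator_diff]
    push_cast
    ring
  rw [Finset.sum_congr rfl keyi, ← Finset.sum_mul]
  rw [telescope N n hN T hT]

end QCatAux
namespace QCatAux

lemma Emap_zero (N : ℕ) : Emap N (fun _ => 0) = fun _ => 0 := by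
  funext T
  simp [Emap]

lemma Fmap_smul (N : ℕ) (c : ℚ) (v : Finset ℕ → ℚ) (T : Finset ℕ) :
    Fmap N (fun S => c * v S) T = c * Fmap N v T := by
  simp only [Fmap, Finset.mul_sum]
  apply Finset.sum_congr rfl
  intro j _
  by_cases hD : (j-1 ∈ T ∧ j ∉ T)
  · rw [if_pos hD, if_pos hD]
    ring
  · rw [if_neg hD, if_neg hD, mul_zero]

lemma Emap_add (N : ℕ) (v w : Finset ℕ → ℚ) (T : Finset ℕ) :
    Emap N (fun S => v S + w S) T = Emap N v T + Emap N w T := by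
  simp only [Emap, ← Finset.sum_add_distrib]
  apply Finset.sum_congr rfl
  intro i _
  by_cases hC : (i+1 ∈ T ∧ i ∉ T)
  · rw [if_pos hC, if_pos hC, if_pos hC]
    ring
  · rw [if_neg hC, if_neg hC, if_neg hC, add_zero]

lemma Emap_smul (N : ℕ) (c : ℚ) (v : Finset ℕ → ℚ) (T : Finset ℕ) :
    Emap N (fun S => c * v S) T = c * Emap N v T := by
  simp only [Emap, Finset.mul_sum]
  apply Finset.sum_congr rfl
  intro i _
  by_cases hC : (i+1 ∈ T ∧ i ∉ T)
  · rw [if_pos hC, if_pos hC]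
    ring
  · rw [if_neg hC, if_neg hC, mul_zero]

lemma Esupp (N n k c : ℕ) (v : Finset ℕ → ℚ)
    (h : ∀ T, v T ≠ 0 → T ∈ PC N n ∧ (∑ i ∈ T, i) + c = k) :
    ∀ T, Emap N v T ≠ 0 → T ∈ PC N n ∧ (∑ i ∈ T, i) + c = k + 1 := by
  intro T hT
  obtain ⟨i, hi, hterm⟩ := Finset.exists_ne_zero_of_sum_ne_zero hT
  have hiN := Finset.mem_range.mp hi
  by_cases hC : (i+1 ∈ T ∧ i ∉ T)
  · rw [if_pos hC] at hterm
    have hv : v (insert i (T.erase (i+1))) ≠ 0 := by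
      intro h0
      rw [h0, mul_zero] at hterm
      exact hterm rfl
    obtain ⟨hPC, hsum⟩ := h _ hv
    obtain ⟨hsub, hcard⟩ := mem_powersetCard.mp hPC
    have hie : i ∉ T.erase (i+1) := fun hmem => hC.2 (Finset.mem_of_mem_erase hmem)
    have heq : (insert i (T.erase (i+1))).erase i = T.erase (i+1) := Finset.erase_insert hie
    -- T ∈ PC
    have hTsub : T ⊆ range N := by
      intro x hx
      by_cases hx1 : x = i+1
      · exact Finset.mem_range.mpr (by omega)
      · have : x ∈ T.erase (i+1) := Finset.mem_erase.mpr ⟨hx1, hx⟩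
        have : x ∈ insert i (T.erase (i+1)) := Finset.mem_insert_of_mem this
        exact hsub this
    have hcardT : T.card = n := by
      have h1 : (T.erase (i+1)).card = T.card - 1 := Finset.card_erase_of_mem hC.1
      have h2 : (insert i (T.erase (i+1))).card = (T.erase (i+1)).card + 1 :=
        Finset.card_insert_of_notMem hie
      have h3 : 0 < T.card := Finset.card_pos.mpr ⟨i+1, hC.1⟩
      omega
    have hsumT : (∑ x ∈ T, x) = (∑ x ∈ insert i (T.erase (i+1)), x) + 1 := by
      have h1 : (∑ x ∈ insert i (T.erase (i+1)), x) = i + ∑ x ∈ T.erase (i+1), x :=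
        Finset.sum_insert hie
      have h2 : (∑ x ∈ T.erase (i+1), x) + (i+1) = ∑ x ∈ T, x :=
        Finset.sum_erase_add T _ hC.1
      omega
    exact ⟨mem_powersetCard.mpr ⟨hTsub, hcardT⟩, by omega⟩
  · rw [if_neg hC] at hterm
    exact absurd rfl hterm

lemma Fsupp (N n k c : ℕ) (v : Finset ℕ → ℚ)
    (h : ∀ T, v T ≠ 0 → T ∈ PC N n ∧ (∑ i ∈ T, i) + c = k) :
    ∀ T, Fmap N v T ≠ 0 → T ∈ PC N n ∧ (∑ i ∈ T, i) + (c+1) = k := by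
  intro T hT
  obtain ⟨j, hj, hterm⟩ := Finset.exists_ne_zero_of_sum_ne_zero hT
  have hjN := Finset.mem_range.mp hj
  by_cases hD : (j-1 ∈ T ∧ j ∉ T)
  · rw [if_pos hD] at hterm
    have hj1 : 1 ≤ j := by
      by_contra hj0
      have : j = 0 := by omega
      subst this
      simp only [Nat.zero_sub] at hD
      exact hD.2 hD.1
    have hv : v (insert j (T.erase (j-1))) ≠ 0 := by
      intro h0
      rw [h0, mul_zero] at hterm
      exact hterm rfl
    obtain ⟨hPC, hsum⟩ := h _ hv
    obtain ⟨hsub, hcard⟩ := mem_powersetCard.mp hPC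
    have hje : j ∉ T.erase (j-1) := fun hmem => hD.2 (Finset.mem_of_mem_erase hmem)
    -- T ∈ PC
    have hTsub : T ⊆ range N := by
      intro x hx
      by_cases hx1 : x = j-1
      · exact Finset.mem_range.mpr (by omega)
      · have : x ∈ T.erase (j-1) := Finset.mem_erase.mpr ⟨hx1, hx⟩
        have : x ∈ insert j (T.erase (j-1)) := Finset.mem_insert_of_mem this
        exact hsub this
    have hcardT : T.card = n := by
      have h1 : (T.erase (j-1)).card = T.card - 1 := Finset.card_erase_of_mem hD.1
      have h2 : (insert j (T.erase (j-1))).card = (T.erase (j-1)).card + 1 :=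
        Finset.card_insert_of_notMem hje
      have h3 : 0 < T.card := Finset.card_pos.mpr ⟨j-1, hD.1⟩
      omega
    have hsumT : (∑ x ∈ T, x) + 1 = (∑ x ∈ insert j (T.erase (j-1)), x) := by
      have h1 : (∑ x ∈ insert j (T.erase (j-1)), x) = j + ∑ x ∈ T.erase (j-1), x :=
        Finset.sum_insert hje
      have h2 : (∑ x ∈ T.erase (j-1), x) + (j-1) = ∑ x ∈ T, x :=
        Finset.sum_erase_add T _ hD.1
      omega
    exact ⟨mem_powersetCard.mpr ⟨hTsub, hcardT⟩, by omega⟩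
  · rw [if_neg hD] at hterm
    exact absurd rfl hterm

end QCatAux
namespace QCatAux

lemma cast_sum_eq (T : Finset ℕ) : (∑ i ∈ T, (i:ℚ)) = ((∑ i ∈ T, i : ℕ) : ℚ) := by
  rw [Nat.cast_sum]

lemma Einj (N n k : ℕ) (hN : 0 < N) (hk : 2*k + 1 ≤ n*(N-1)) (v : Finset ℕ → ℚ)
    (hsupp : ∀ T, v T ≠ 0 → T ∈ PC N n ∧ (∑ i ∈ T, i) = k)
    (hE : Emap N v = fun _ => 0) : v = fun _ => 0 := by
  set M : ℕ := n*(N-1) with hM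
  set mu : ℚ := 2*(k:ℚ) - (M:ℚ) with hmu
  have hmuneg : mu ≤ -1 := by
    rw [hmu]
    have : (2*k:ℚ) + 1 ≤ (M:ℚ) := by exact_mod_cast hk
    push_cast at this ⊢
    linarith
  set w : ℕ → (Finset ℕ → ℚ) := fun j => (Fmap N)^[j] v with hw
  have hw0 : w 0 = v := rfl
  have hwsucc : ∀ j, w (j+1) = Fmap N (w j) := by
    intro j
    rw [hw]
    exact Function.iterate_succ_apply' (Fmap N) j v
  set lam : ℕ → ℚ := fun j => ((j:ℚ)+1)*(mu - j) with hlam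
  have hlamne : ∀ j, lam j ≠ 0 := by
    intro j
    rw [hlam]
    apply mul_ne_zero
    · positivity
    · have : (mu : ℚ) - j < 0 := by
        have : (0:ℚ) ≤ j := by positivity
        linarith
      linarith
  -- offset support
  have hsupp' : ∀ j, ∀ T, (w j) T ≠ 0 → T ∈ PC N n ∧ (∑ i ∈ T, i) + j = k := by
    intro j
    induction j with
    | zero =>
      intro T hT
      obtain ⟨h1, h2⟩ := hsupp T hT
      exact ⟨h1, by omega⟩
    | succ j ih =>
      rw [hwsucc j]
      exact Fsupp N n k j (w j) ih
  -- eigen relation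
  have heigen : ∀ j, ∀ T, Emap N (w (j+1)) T = lam j * (w j) T := by
    intro j
    induction j with
    | zero =>
      intro T
      by_cases hTPC : T ∈ PC N n
      · rw [hwsucc 0, hw0]
        have hcomm := comm_lemma N n hN v T hTPC
        rw [hE] at hcomm
        have hF0 : Fmap N (fun _ => (0:ℚ)) T = 0 := by
          simp [Fmap]
        rw [hF0] at hcomm
        have : Emap N (Fmap N v) T = (2 * (∑ i ∈ T, (i:ℚ)) - (M:ℚ)) * v T := by
          linarith [hcomm]
        rw [this]
        by_cases hvT : v T = 0
        · rw [hvT, mul_zero, mul_zero]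
        · have hsum := (hsupp T hvT).2
          rw [cast_sum_eq, hsum, hlam]
          push_cast
          ring
      · have hL : Emap N (w 1) T = 0 := by
          by_contra hne
          have := Esupp N n k 1 (w 1) (fun T' hT' => (hsupp' 1 T' hT')) T hne
          exact hTPC this.1
        have hR : (w 0) T = 0 := by
          by_contra hne
          exact hTPC ((hsupp' 0 T hne).1)
        rw [hL, hR, mul_zero]
    | succ j ih =>
      intro T
      by_cases hTPC : T ∈ PC N n
      · rw [hwsucc (j+1)]
        have hcomm := comm_lemma N n hN (w (j+1)) T hTPC
        have hEw : Emap N (w (j+1)) = fun S => lam j * (w j) S := by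
          funext S
          exact ih S
        rw [hEw] at hcomm
        rw [Fmap_smul N (lam j) (w j) T] at hcomm
        rw [← hwsucc j] at hcomm
        have hgrade : (2 * (∑ i ∈ T, (i:ℚ)) - (M:ℚ)) * (w (j+1)) T
            = (mu - 2*((j:ℚ)+1)) * (w (j+1)) T := by
          by_cases hwT : (w (j+1)) T = 0
          · rw [hwT, mul_zero, mul_zero]
          · have hsum := (hsupp' (j+1) T hwT).2
            have hcast : ((∑ i ∈ T, i : ℕ) : ℚ) + ((j:ℚ)+1) = (k:ℚ) := by
              exact_mod_cast hsum
            rw [cast_sum_eq]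
            rw [hmu]
            have h2 : ((∑ i ∈ T, i : ℕ) : ℚ) = (k:ℚ) - ((j:ℚ)+1) := by linarith
            rw [h2]
            ring
        rw [hgrade] at hcomm
        have : Emap N (Fmap N (w (j+1))) T = lam j * (w (j+1)) T + (mu - 2*((j:ℚ)+1)) * (w (j+1)) T := by
          linarith [hcomm]
        rw [this, hlam]
        push_cast
        ring
      · have hL : Emap N (w (j+2)) T = 0 := by
          by_contra hne
          have := Esupp N n k (j+2) (w (j+2)) (fun T' hT' => (hsupp' (j+2) T' hT')) T hne
          exact hTPC this.1
        have hR : (w (j+1)) T = 0 := by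
          by_contra hne
          exact hTPC ((hsupp' (j+1) T hne).1)
        rw [hL, hR, mul_zero]
  -- vanishing at step k+1
  have hvanish : w (k+1) = fun _ => 0 := by
    funext T
    by_contra hne
    have := (hsupp' (k+1) T hne).2
    omega
  -- descent
  have hdesc : ∀ j, w (j+1) = (fun _ => 0) → w j = fun _ => 0 := by
    intro j hzero
    funext T
    have := heigen j T
    rw [hzero] at this
    rw [Emap_zero] at this
    have h0 : lam j * (w j) T = 0 := this.symm
    rcases mul_eq_zero.mp h0 with h | h
    · exact absurd h (hlamne j)
    · exact h
  have main : ∀ i, i ≤ k+1 → w (k+1-i) = fun _ => 0 := by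
    intro i
    induction i with
    | zero => intro _; exact hvanish
    | succ i ih =>
      intro hi
      have h1 : w (k+1-i) = fun _ => 0 := ih (by omega)
      have h2 : k+1-i = (k+1-(i+1)) + 1 := by omega
      rw [h2] at h1
      exact hdesc _ h1
  have := main (k+1) le_rfl
  rw [show k+1-(k+1) = 0 by omega, hw0] at this
  exact this

end QCatAux
namespace QCatAux

lemma aa_mono (N n : ℕ) (hN : 0 < N) :
    ∀ s, 2*s + 1 ≤ n*(N-1) → aa N n s ≤ aa N n (s+1) := by
  intro s hs
  classical
  set Bs := (PC N n).filter (fun S => (∑ i ∈ S, i) = s) with hBs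
  set Bt := (PC N n).filter (fun S => (∑ i ∈ S, i) = s+1) with hBt
  let ext : ((↥Bs) → ℚ) → (Finset ℕ → ℚ) := fun u S => if h : S ∈ Bs then u ⟨S, h⟩ else 0
  have hext_supp : ∀ u, ∀ T, ext u T ≠ 0 → T ∈ PC N n ∧ (∑ i ∈ T, i) = s := by
    intro u T hT
    by_cases h : T ∈ Bs
    · obtain ⟨h1, h2⟩ := Finset.mem_filter.mp h
      exact ⟨h1, h2⟩
    · exfalso
      apply hT
      simp only [ext, dif_neg h]
  have hext_add : ∀ u v : (↥Bs) → ℚ, ext (u + v) = fun S => ext u S + ext v S := by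
    intro u v
    funext S
    by_cases h : S ∈ Bs
    · simp only [ext, dif_pos h, Pi.add_apply]
    · simp only [ext, dif_neg h, add_zero]
  have hext_smul : ∀ (c : ℚ) (u : (↥Bs) → ℚ), ext (c • u) = fun S => c * ext u S := by
    intro c u
    funext S
    by_cases h : S ∈ Bs
    · simp only [ext, dif_pos h, Pi.smul_apply, smul_eq_mul]
    · simp only [ext, dif_neg h, mul_zero]
  let Φ : ((↥Bs) → ℚ) →ₗ[ℚ] ((↥Bt) → ℚ) := {
    toFun := fun u T => Emap N (ext u) T.1
    map_add' := by
      intro u v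
      funext T
      show Emap N (ext (u + v)) T.1 = Emap N (ext u) T.1 + Emap N (ext v) T.1
      rw [hext_add, Emap_add]
    map_smul' := by
      intro c u
      funext T
      show Emap N (ext (c • u)) T.1 = c * Emap N (ext u) T.1
      rw [hext_smul, Emap_smul] }
  have hinj : Function.Injective Φ := by
    rw [← LinearMap.ker_eq_bot, LinearMap.ker_eq_bot']
    intro u hu
    have hE0 : Emap N (ext u) = fun _ => 0 := by
      funext T
      by_cases hT : T ∈ Bt
      · have := congrFun hu ⟨T, hT⟩
        exact this
      · by_contra hne
        have := Esupp N n s 0 (ext u) (fun T' hT' => by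
          obtain ⟨a, b⟩ := hext_supp u T' hT'
          exact ⟨a, by omega⟩) T hne
        apply hT
        rw [hBt, Finset.mem_filter]
        exact ⟨this.1, by omega⟩
    have hzero := Einj N n s hN hs (ext u) (hext_supp u) hE0
    funext x
    have := congrFun hzero x.1
    simp only [ext, dif_pos x.2] at this
    rw [show (⟨x.1, x.2⟩ : {S // S ∈ Bs}) = x from rfl] at this
    exact this
  have hrank := LinearMap.finrank_le_finrank_of_injective hinj
  rw [Module.finrank_fintype_fun_eq_card, Module.finrank_fintype_fun_eq_card,
    Fintype.card_coe, Fintype.card_coe] at hrank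
  exact hrank

end QCatAux
namespace QCatAux

def APrev (N n : ℕ) : ℕ → ℕ
  | 0 => 0
  | (j+1) => AA N n j

def cZ (N n j : ℕ) : ℤ := (AA N n j : ℤ) - APrev N n j

lemma APrev_eq (N n j : ℕ) (hj : 1 ≤ j) : APrev N n j = AA N n (j-1) := by
  obtain ⟨d, rfl⟩ : ∃ d, j = d + 1 := ⟨j-1, by omega⟩
  show AA N n d = AA N n (d+1-1)
  norm_num

lemma cZ_boundary (N n : ℕ) (hN : 0 < N) (hn : n ≤ N) (hn1 : 1 ≤ n)
    (hcop : Nat.Coprime n N) :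
    cZ N n (n*(N-1)+1-N) = cZ N n 0 := by
  set M := n*(N-1) with hM
  set D := M+1-N with hD
  have hMN : N - 1 ≤ M := by
    have : 1*(N-1) ≤ n*(N-1) := Nat.mul_le_mul_right _ hn1
    omega
  rcases Nat.eq_zero_or_pos D with hD0 | hD1
  · rw [hD0]
  · show cZ N n D = cZ N n 0
    have hDM : D ≤ M := by omega
    have r1 := AA_reflect (N := N) (n := n) (j := D) hn (by omega)
    have r2 := AA_reflect (N := N) (n := n) (j := D-1) hn (by omega)
    rw [← hM] at r1 r2
    rw [show M - D = N-1 by omega] at r1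
    rw [show M - (D-1) = N by omega] at r2
    have rec1 : AA N n N = aa N n N + AA N n 0 := by
      have := AA_rec (N := N) (n := n) (k := N) hN le_rfl
      rwa [Nat.sub_self] at this
    have lt1 : AA N n (N-1) = aa N n (N-1) := AA_lt (by omega)
    have s1 : aa N n D = aa N n (N-1) := aa_symm hn (by omega)
    have s2 : aa N n (D-1) = aa N n N := aa_symm hn (by omega)
    have e1 : Er N n (((N-1 : ℕ)) : ZMod N) = Er N n 0 := Er_const N n hN hcop _ _
    have e2 : Er N n (((N : ℕ)) : ZMod N) = Er N n 0 := Er_const N n hN hcop _ _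
    rw [e1] at r1
    rw [e2] at r2
    have hAPD : APrev N n D = AA N n (D-1) := APrev_eq N n D (by omega)
    have hAP0 : APrev N n 0 = 0 := rfl
    rw [cZ, cZ, hAPD, hAP0]
    omega

lemma cZ_symm (N n : ℕ) (hN : 0 < N) (hn : n ≤ N) (hn1 : 1 ≤ n)
    (hcop : Nat.Coprime n N) (j : ℕ) (hj : j ≤ n*(N-1)+1-N) :
    cZ N n j = cZ N n (n*(N-1)+1-N - j) := by
  set M := n*(N-1) with hM
  set D := M+1-N with hD
  have hMN : N - 1 ≤ M := by
    have : 1*(N-1) ≤ n*(N-1) := Nat.mul_le_mul_right _ hn1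
    omega
  rcases Nat.eq_zero_or_pos j with rfl | hj1
  · rw [Nat.sub_zero]
    have := cZ_boundary N n hN hn hn1 hcop
    rw [hD, hM]
    exact this.symm
  rcases Nat.eq_or_lt_of_le hj with hjD | hjD
  · rw [hjD, Nat.sub_self]
    have := cZ_boundary N n hN hn hn1 hcop
    rw [hD, hM]
    exact this
  -- middle case : 1 ≤ j ≤ D - 1
  have r1 := AA_reflect (N := N) (n := n) (j := j) hn (by omega)
  have r2 := AA_reflect (N := N) (n := n) (j := j-1) hn (by omega)
  rw [← hM] at r1 r2
  have rec1 : AA N n (M-j) = aa N n (M-j) + AA N n (D-j-1) := by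
    have := AA_rec (N := N) (n := n) (k := M-j) hN (by omega)
    rwa [show M - j - N = D-j-1 by omega] at this
  have rec2 : AA N n (M-(j-1)) = aa N n (M-(j-1)) + AA N n (D-j) := by
    have := AA_rec (N := N) (n := n) (k := M-(j-1)) hN (by omega)
    rwa [show M - (j-1) - N = D-j by omega] at this
  have s1 : aa N n (M-j) = aa N n j := aa_symm hn (by omega)
  have s2 : aa N n (M-(j-1)) = aa N n (j-1) := aa_symm hn (by omega)
  have e1 : Er N n (((M-j : ℕ)) : ZMod N) = Er N n 0 := Er_const N n hN hcop _ _
  have e2 : Er N n (((M-(j-1) : ℕ)) : ZMod N) = Er N n 0 := Er_const N n hN hcop _ _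
  rw [e1] at r1
  rw [e2] at r2
  have hAPj : APrev N n j = AA N n (j-1) := APrev_eq N n j (by omega)
  have hAPD : APrev N n (D-j) = AA N n (D-j-1) := APrev_eq N n (D-j) (by omega)
  rw [cZ, cZ, hAPj, hAPD]
  omega

lemma cZ_nonneg (N n : ℕ) (hN : 0 < N) (hn : n ≤ N) (hn1 : 1 ≤ n)
    (hcop : Nat.Coprime n N) (j : ℕ) (hj : j ≤ n*(N-1)+1-N) :
    0 ≤ cZ N n j := by
  set M := n*(N-1) with hM
  set D := M+1-N with hD
  have hMN : N - 1 ≤ M := by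
    have : 1*(N-1) ≤ n*(N-1) := Nat.mul_le_mul_right _ hn1
    omega
  have base : ∀ i, i ≤ D → 2*i ≤ M → 0 ≤ cZ N n i := by
    intro i _ h2i
    rcases Nat.eq_zero_or_pos i with rfl | hi1
    · rw [cZ]
      show (0:ℤ) ≤ (AA N n 0 : ℤ) - (0:ℕ)
      simp
    · have hAPi : APrev N n i = AA N n (i-1) := APrev_eq N n i (by omega)
      rw [cZ, hAPi]
      have hmono := AA_mono hN (fun s hs => aa_mono N n hN s hs) (i-1) (by omega)
      rw [show i - 1 + 1 = i by omega] at hmono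
      omega
  rcases Nat.lt_or_ge (2*j) (M+1) with h2j | h2j
  · exact base j hj (by omega)
  · rw [cZ_symm N n hN hn hn1 hcop j hj]
    exact base (D - j) (by omega) (by omega)

lemma cZ_zero_of_gt (N n : ℕ) (hN : 0 < N) (hn : n ≤ N) (hn1 : 1 ≤ n)
    (hcop : Nat.Coprime n N) : ∀ j, n*(N-1)+1-N < j → cZ N n j = 0 := by
  intro j
  induction j using Nat.strong_induction_on with
  | _ j ih =>
    intro hj
    set M := n*(N-1) with hM
    set D := M+1-N with hD
    have hMN : N - 1 ≤ M := by
      have : 1*(N-1) ≤ n*(N-1) := Nat.mul_le_mul_right _ hn1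
      omega
    have hj1 : 1 ≤ j := by omega
    have hAPj : APrev N n j = AA N n (j-1) := APrev_eq N n j (by omega)
    rcases Nat.lt_or_ge j (M+1) with hjM | hjM
    · -- D < j ≤ M
      have r1 := AA_reflect (N := N) (n := n) (j := j) hn (by omega)
      have r2 := AA_reflect (N := N) (n := n) (j := j-1) hn (by omega)
      rw [← hM] at r1 r2
      have lt1 : AA N n (M-j) = aa N n (M-j) := AA_lt (by omega)
      have lt2 : AA N n (M-(j-1)) = aa N n (M-(j-1)) := AA_lt (by omega)
      have s1 : aa N n (M-j) = aa N n j := aa_symm hn (by omega)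
      have s2 : aa N n (M-(j-1)) = aa N n (j-1) := aa_symm hn (by omega)
      have e1 : Er N n (((M-j : ℕ)) : ZMod N) = Er N n 0 := Er_const N n hN hcop _ _
      have e2 : Er N n (((M-(j-1) : ℕ)) : ZMod N) = Er N n 0 := Er_const N n hN hcop _ _
      rw [e1] at r1
      rw [e2] at r2
      rw [cZ, hAPj]
      omega
    · rcases Nat.eq_or_lt_of_le (show M+1 ≤ j by omega) with hjM1 | hjM1
      · -- j = M+1
        have hjm : j - 1 = M := by omega
        have rec1 : AA N n j = aa N n j + AA N n D := by
          have := AA_rec (N := N) (n := n) (k := j) hN (by omega)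
          rwa [show j - N = D by omega] at this
        have haj : aa N n j = 0 := aa_eq_zero_of_gt (by omega)
        have hAPj' : APrev N n j = AA N n M := by rw [hAPj, hjm]
        have hStabM : AA N n M = Er N n 0 := by
          have h1 : AA N n M = Er N n ((M:ℕ) : ZMod N) := AA_stable (le_refl M)
          rw [h1]
          exact Er_const N n hN hcop _ _
        have hAAD : AA N n D = Er N n 0 := by
          rcases Nat.eq_zero_or_pos D with hD0 | hD1
          · have lt0 : AA N n 0 = aa N n 0 := AA_lt (by omega)
            have s0 : aa N n 0 = aa N n M := aa_symm hn (by omega)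
            have lt1 : AA N n M = aa N n M := AA_lt (by omega)
            rw [hD0, lt0, s0, ← lt1, hStabM]
          · have hcD := cZ_boundary N n hN hn hn1 hcop
            rw [← hM, ← hD] at hcD
            have hAPD : APrev N n D = AA N n (D-1) := APrev_eq N n D hD1
            have hAP0 : APrev N n 0 = 0 := rfl
            rw [cZ, cZ, hAPD, hAP0] at hcD
            have recM : AA N n M = aa N n M + AA N n (D-1) := by
              have := AA_rec (N := N) (n := n) (k := M) hN (by omega)
              rwa [show M - N = D-1 by omega] at this
            have lt0 : AA N n 0 = aa N n 0 := AA_lt (by omega)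
            have s0 : aa N n 0 = aa N n M := aa_symm hn (by omega)
            omega
        rw [cZ, hAPj', rec1, haj, hStabM, hAAD]
        push_cast
        ring
      · -- j > M+1
        have rec1 : AA N n j = aa N n j + AA N n (j-N) := by
          exact AA_rec (N := N) (n := n) (k := j) hN (by omega)
        have rec2 : AA N n (j-1) = aa N n (j-1) + AA N n (j-1-N) := by
          exact AA_rec (N := N) (n := n) (k := j-1) hN (by omega)
        have haj : aa N n j = 0 := aa_eq_zero_of_gt (by omega)
        have haj1 : aa N n (j-1) = 0 := aa_eq_zero_of_gt (by omega)
        have hih := ih (j-N) (by omega) (by omega)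
        have hAPjN : APrev N n (j-N) = AA N n (j-N-1) := APrev_eq N n (j-N) (by omega)
        rw [cZ, hAPjN] at hih
        rw [cZ, hAPj]
        rw [show j - 1 - N = j - N - 1 by omega] at rec2
        omega

lemma AA_zero_of_lt (N n : ℕ) (j : ℕ) (hj : j < Tsum n) : AA N n j = 0 := by
  rw [AA]
  apply Finset.sum_eq_zero
  intro s hs
  have := Finset.mem_range.mp hs
  rw [aa_eq_zero_of_lt (by omega), ite_self]

lemma cZ_zero_of_lt (N n : ℕ) (j : ℕ) (hj : j < Tsum n) : cZ N n j = 0 := by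
  rw [cZ, AA_zero_of_lt N n j hj]
  rcases j with _ | d
  · norm_num [APrev]
  · show (0:ℤ) - (AA N n d : ℤ) = 0
    rw [AA_zero_of_lt N n d (by omega)]
    norm_num

end QCatAux
namespace QCatAux

noncomputable def PN (N n : ℕ) : Polynomial ℕ :=
  ∑ j ∈ range (n*(N-1)+1-N+1), Polynomial.C ((cZ N n (j + Tsum n)).toNat) * X^j

noncomputable def Pq (N n : ℕ) : Polynomial ℚ :=
  ∑ j ∈ range (n*(N-1)+1-N+1), Polynomial.C (((cZ N n j).toNat : ℚ)) * X^j

lemma coeff_sum_CX {R : Type*} [Semiring R] (c : ℕ → R) (B k : ℕ) :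
    (∑ j ∈ range B, Polynomial.C (c j) * X^j).coeff k = if k < B then c k else 0 := by
  rw [Polynomial.finset_sum_coeff]
  have : ∀ j ∈ range B, (Polynomial.C (c j) * X^j).coeff k = if k = j then c j else 0 := by
    intro j _
    rw [Polynomial.coeff_C_mul, Polynomial.coeff_X_pow]
    by_cases h : k = j <;> simp [h]
  rw [Finset.sum_congr rfl this, Finset.sum_ite_eq]
  simp [Finset.mem_range]

lemma Pq_coeff (N n : ℕ) (hN : 0 < N) (hn : n ≤ N) (hn1 : 1 ≤ n) (hcop : Nat.Coprime n N)
    (k : ℕ) : (Pq N n).coeff k = ((cZ N n k : ℤ) : ℚ) := by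
  rw [Pq, coeff_sum_CX]
  by_cases h : k < n*(N-1)+1-N+1
  · rw [if_pos h]
    have h2 : ((cZ N n k).toNat : ℤ) = cZ N n k :=
      Int.toNat_of_nonneg (cZ_nonneg N n hN hn hn1 hcop k (by omega))
    exact_mod_cast h2
  · rw [if_neg h]
    rw [cZ_zero_of_gt N n hN hn hn1 hcop k (by omega)]
    norm_num

lemma PNmap_eq (N n : ℕ) (hN : 0 < N) (hn : n ≤ N) (hn1 : 1 ≤ n) (hcop : Nat.Coprime n N) :
    X ^ (Tsum n) * (PN N n).map (Nat.castRingHom ℚ) = Pq N n := by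
  apply Polynomial.ext
  intro k
  rw [mul_comm, Polynomial.coeff_mul_X_pow', Pq_coeff N n hN hn hn1 hcop]
  by_cases hk : Tsum n ≤ k
  · rw [if_pos hk, Polynomial.coeff_map, PN, coeff_sum_CX]
    by_cases h2 : k - Tsum n < n*(N-1)+1-N+1
    · rw [if_pos h2]
      rw [show k - Tsum n + Tsum n = k by omega]
      by_cases h3 : k ≤ n*(N-1)+1-N
      · have h2 : ((cZ N n k).toNat : ℤ) = cZ N n k :=
          Int.toNat_of_nonneg (cZ_nonneg N n hN hn hn1 hcop k h3)
        simp only [Nat.castRingHom, eq_natCast, RingHom.coe_mk, MonoidHom.coe_mk, OneHom.coe_mk]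
        exact_mod_cast h2
      · rw [cZ_zero_of_gt N n hN hn hn1 hcop k (by omega)]
        norm_num
    · rw [if_neg h2]
      rw [cZ_zero_of_gt N n hN hn hn1 hcop k (by omega)]
      norm_num
  · rw [if_neg hk]
    rw [cZ_zero_of_lt N n k (by omega)]
    norm_num

lemma key_coeff (N n : ℕ) (hN : 0 < N) (k : ℕ) :
    (if N ≤ k then cZ N n (k-N) else 0) - cZ N n k
      = (if 1 ≤ k then (aa N n (k-1) : ℤ) else 0) - (aa N n k : ℤ) := by
  rcases Nat.eq_zero_or_pos k with rfl | hk1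
  · rw [if_neg (by omega), if_neg (by omega)]
    rw [cZ, show APrev N n 0 = 0 from rfl, AA_lt hN]
    push_cast
    ring
  rcases Nat.lt_or_ge k N with hkN | hkN
  · rw [if_neg (by omega), if_pos (show 1 ≤ k by omega)]
    rw [cZ, APrev_eq N n k hk1, AA_lt hkN, AA_lt (by omega)]
    push_cast
    ring
  rcases Nat.eq_or_lt_of_le hkN with hkN' | hkN'
  · -- k = N
    rw [if_pos hkN, if_pos (show 1 ≤ k by omega)]
    rw [show k - N = 0 by omega]
    have rec1 : AA N n k = aa N n k + AA N n 0 := by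
      have := AA_rec (N := N) (n := n) (k := k) hN hkN
      rwa [show k - N = 0 by omega] at this
    rw [cZ, cZ, APrev_eq N n k hk1, show APrev N n 0 = 0 from rfl]
    rw [show k - 1 = N - 1 by omega] at *
    rw [AA_lt (show N-1 < N by omega)]
    omega
  · -- k > N
    rw [if_pos hkN, if_pos (show 1 ≤ k by omega)]
    have rec1 : AA N n k = aa N n k + AA N n (k-N) := AA_rec hN hkN
    have rec2 : AA N n (k-1) = aa N n (k-1) + AA N n (k-N-1) := by
      have := AA_rec (N := N) (n := n) (k := k-1) hN (by omega)
      rwa [show k - 1 - N = k-N-1 by omega] at this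
    rw [cZ, cZ, APrev_eq N n k hk1, APrev_eq N n (k-N) (by omega)]
    omega

lemma Pq_mul (N n : ℕ) (hN : 0 < N) (hn : n ≤ N) (hn1 : 1 ≤ n) (hcop : Nat.Coprime n N) :
    Pq N n * ((X : Polynomial ℚ)^N - 1) = Gp N n * ((X : Polynomial ℚ) - 1) := by
  apply Polynomial.ext
  intro k
  rw [mul_sub, mul_sub, mul_one, mul_one, Polynomial.coeff_sub, Polynomial.coeff_sub]
  rw [Polynomial.coeff_mul_X_pow']
  rw [show (X : Polynomial ℚ) = X^1 by rw [pow_one]]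
  rw [Polynomial.coeff_mul_X_pow']
  have e1 : (Pq N n).coeff k = ((cZ N n k : ℤ) : ℚ) := Pq_coeff N n hN hn hn1 hcop k
  have e2 : (Pq N n).coeff (k-N) = ((cZ N n (k-N) : ℤ) : ℚ) := Pq_coeff N n hN hn hn1 hcop (k-N)
  rw [e1, e2, Gp_coeff, Gp_coeff]
  have key := key_coeff N n hN k
  by_cases h1 : N ≤ k <;> by_cases h2 : 1 ≤ k
  · rw [if_pos h1, if_pos h2] at key ⊢
    exact_mod_cast key
  · omega
  · rw [if_neg h1, if_pos h2] at key ⊢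
    exact_mod_cast key
  · rw [if_neg h1, if_neg h2] at key ⊢
    exact_mod_cast key

end QCatAux

open QCatAux

theorem stmt_1 (m n : ℕ) (hm : 0 < m) (hn : 0 < n) (h : Nat.Coprime m n) :
    ∃ P : Polynomial ℕ,
      algebraMap (Polynomial ℚ) (RatFunc ℚ) (P.map (Nat.castRingHom ℚ)) = qCat q m n := by
  refine ⟨PN (m+n) n, ?_⟩
  have hN : 0 < m + n := by omega
  have hnN : n ≤ m + n := by omega
  have hn1 : 1 ≤ n := hn
  have hcop : Nat.Coprime n (m+n) := Nat.coprime_add_self_right.mpr h.symm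
  have h1 := PNmap_eq (m+n) n hN hnN hn1 hcop
  have h2 := Pq_mul (m+n) n hN hnN hn1 hcop
  rw [← h1] at h2
  -- apply algebraMap
  have h3 := congrArg (algebraMap (Polynomial ℚ) (RatFunc ℚ)) h2
  simp only [map_mul, map_sub, map_pow, map_one, RatFunc.algebraMap_X] at h3
  rw [Gp_eq (m+n) n hnN] at h3
  rw [← hq] at h3
  set Pc := algebraMap (Polynomial ℚ) (RatFunc ℚ) ((PN (m+n) n).map (Nat.castRingHom ℚ)) with hPc
  -- h3 : q ^ Tsum n * Pc * (q ^ (m+n) - 1) = q ^ Tsum n * qbinom q (m+n) n * (q - 1)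
  have hqT : q ^ (Tsum n) ≠ 0 := pow_ne_zero _ q_ne_zero
  have hqN : (1 : RatFunc ℚ) - q ^ (m+n) ≠ 0 := one_sub_q_pow_ne (m+n) hN
  have hq1 : (1 : RatFunc ℚ) - q ≠ 0 := one_sub_q_ne
  have h4 : q ^ (Tsum n) * (Pc * ((1:RatFunc ℚ) - q ^ (m+n)))
      = q ^ (Tsum n) * (qbinom q (m+n) n * (1 - q)) := by
    linear_combination -h3
  have h5 : Pc * ((1:RatFunc ℚ) - q ^ (m+n)) = qbinom q (m+n) n * (1 - q) :=
    mul_left_cancel₀ hqT h4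
  rw [qCat, qint, inv_div]
  rw [div_mul_eq_mul_div, eq_div_iff hqN]
  linear_combination h5
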